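/- Let G = C(α_1,…,α_{2k}) be a C-graph. Then the quotient matrix Q_π(G) has exactly k negative eigenvalues, no zero eigenvalue, and exactly k positive eigenvalues (counted with multiplicity); that is, the inertia of Q_π(G) is (k, 0, k). -/

import Mathlib

open Matrix BigOperators
open scoped Classical

/-- The equivalence splitting off the last cell of `Σ j : Fin (m+1), Fin (α j)`. -/
def splitLast (α : ℕ → ℕ) (m : ℕ) :
    (Σ j : Fin (m + 1), Fin (α j.val)) ≃ (Σ j : Fin m, Fin (α j.val)) ⊕ Fin (α m) where
  toFun x :=
    if h : x.1.val < m then Sum.inl ⟨⟨x.1.val, h⟩, x.2⟩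
    else Sum.inr (Fin.cast (congrArg α
      (Nat.le_antisymm (Nat.lt_succ_iff.mp x.1.isLt) (Nat.le_of_not_lt h))) x.2)
  invFun x :=
    match x with
    | Sum.inl y => ⟨⟨y.1.val, Nat.lt_succ_of_lt y.1.isLt⟩, y.2⟩
    | Sum.inr a => ⟨⟨m, Nat.lt_succ_self m⟩, a⟩
  left_inv := by
    rintro ⟨⟨jv, hj⟩, a⟩
    by_cases h : jv < m
    · simp [h]
    · have hm : jv = m := Nat.le_antisymm (Nat.lt_succ_iff.mp hj) (Nat.le_of_not_lt h)
      subst hm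
      simp [h, Fin.cast]
  right_inv := by
    rintro (⟨⟨jv, hj⟩, a⟩ | a)
    · simp [hj]
    · simp [Fin.cast]

/-- The cograph `C(α 0, α 1, …, α (m-1))` (1-indexed in the paper: `C(α_1,…,α_m)`),
defined recursively: `C(α_1)` is the complement of the complete graph `K_{α_1}`, and
`C(α_1,…,α_i)` is the complement of the disjoint union of `C(α_1,…,α_{i-1})` and `K_{α_i}`.
The vertices added at step `j` (the cell `C_j`) are the pairs `⟨j, a⟩`. -/
def cographC (α : ℕ → ℕ) : (m : ℕ) → SimpleGraph (Σ j : Fin m, Fin (α j.val))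
  | 0 => ⊥
  | m + 1 =>
      SimpleGraph.comap (splitLast α m)
        ((cographC α m ⊕g (⊤ : SimpleGraph (Fin (α m))))ᶜ)

/-- The real adjacency matrix of a finite simple graph. -/
noncomputable def adjMat {V : Type*} [Fintype V] (G : SimpleGraph V) : Matrix V V ℝ :=
  Matrix.of fun u v => if G.Adj u v then (1 : ℝ) else 0

/-- The quotient matrix `Q_π(G)` of the C-graph `C(α 0, …, α (2k-1))`.  Rows and columns are
indexed by `Fin (2*k)`; the paper's 1-based index `i` corresponds to `i.val + 1` here. -/
def quotientMatrix (α : ℕ → ℕ) (k : ℕ) : Matrix (Fin (2 * k)) (Fin (2 * k)) ℝ :=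
  Matrix.of fun i j =>
    if i = j then (if Odd (i.val + 1) then (α i.val : ℝ) - 1 else 0)
    else if (Even (i.val + 1) ∧ j.val < i.val) ∨ (Even (j.val + 1) ∧ i.val < j.val)
      then (α j.val : ℝ) else 0

noncomputable section Stmt8Aux

/-- ℕ-indexed entries of the symmetrizing matrix `T` with `Q = T·diag(α)`. -/
def tN (α : ℕ → ℕ) (i j : ℕ) : ℝ :=
  if i = j then (if Odd (i + 1) then 1 - (α i : ℝ)⁻¹ else 0)
  else if (Even (i + 1) ∧ j < i) ∨ (Even (j + 1) ∧ i < j) then 1 else 0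

def tMat (α : ℕ → ℕ) (k : ℕ) : Matrix (Fin (2 * k)) (Fin (2 * k)) ℝ :=
  Matrix.of fun i j => tN α i.val j.val

def dN (k : ℕ) (c : Fin k → ℝ) : ℕ → ℝ :=
  fun t => if h : t < k then c ⟨t, h⟩ else 0

def Jmap (α : ℕ → ℕ) (k : ℕ) (l : ℝ) :
    (Fin k → ℝ) →ₗ[ℝ] (Fin (2*k) → ℝ) where
  toFun c := fun i => (Real.sqrt (α i.val))⁻¹ *
     (if i.val % 2 = 0 then dN k c (i.val/2) else l * dN k c (i.val/2))
  map_add' a b := by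
    funext i
    simp only [dN, Pi.add_apply]
    split_ifs <;> ring
  map_smul' r a := by
    funext i
    simp only [dN, Pi.smul_apply, RingHom.id_apply, smul_eq_mul]
    split_ifs <;> ring

def Ei (α : ℕ → ℕ) (k : ℕ) : Matrix (Fin (2*k)) (Fin (2*k)) ℝ :=
  Matrix.diagonal (fun i => Real.sqrt (α i.val))

lemma tN_symm (α : ℕ → ℕ) (i j : ℕ) : tN α i j = tN α j i := by
  unfold tN
  by_cases h : i = j
  · simp [h]
  · have h' : j ≠ i := fun hh => h hh.symm
    simp only [if_neg h, if_neg h']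
    congr 1
    exact propext or_comm

lemma hQ_eq (α : ℕ → ℕ) (k : ℕ) (hα : ∀ i < 2 * k, 0 < α i) :
    quotientMatrix α k = tMat α k * Matrix.diagonal (fun i : Fin (2*k) => (α i.val : ℝ)) := by
  ext i j
  rw [Matrix.mul_apply]
  rw [Finset.sum_eq_single j]
  · simp only [Matrix.diagonal_apply_eq]
    by_cases h : i = j
    · subst h
      have hne : (α i.val : ℝ) ≠ 0 := by exact_mod_cast (hα i.val i.isLt).ne'
      by_cases hodd : Odd (i.val + 1)
      · simp only [quotientMatrix, tMat, tN, Matrix.of_apply, if_pos rfl, if_pos hodd, ↓reduceIte]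
        field_simp
      · simp [quotientMatrix, tMat, tN, hodd]
    · have h' : ¬ (i.val = j.val) := fun hh => h (Fin.ext hh)
      simp only [quotientMatrix, tMat, tN, Matrix.of_apply, if_neg h, if_neg h']
      by_cases hp : (Even (i.val + 1) ∧ j.val < i.val) ∨ (Even (j.val + 1) ∧ i.val < j.val)
      · rw [if_pos hp, if_pos hp, one_mul]
      · rw [if_neg hp, if_neg hp, zero_mul]
  · intro b _ hb
    exact mul_eq_zero_of_right _ (Matrix.diagonal_apply_ne _ hb)
  · simp

lemma charpoly_conj {n : Type*} [Fintype n] [DecidableEq n]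
    (P P' M : Matrix n n ℝ) (h : P * P' = 1) :
    (P * M * P').charpoly = M.charpoly := by
  set F : Matrix n n ℝ →+* Matrix n n (Polynomial ℝ) :=
    (Polynomial.C : ℝ →+* Polynomial ℝ).mapMatrix with hF
  have key : Matrix.charmatrix (P * M * P') = F P * Matrix.charmatrix M * F P' := by
    unfold Matrix.charmatrix
    rw [Matrix.mul_sub, Matrix.sub_mul]
    congr 1
    · have hc : F P * Matrix.scalar n Polynomial.X = Matrix.scalar n Polynomial.X * F P :=
        ((Matrix.scalar_commute Polynomial.X (fun r => Commute.all _ _) (F P))).eq.symm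
      rw [hc, mul_assoc, ← _root_.map_mul F, h, _root_.map_one F, mul_one]
    · rw [← _root_.map_mul F, ← _root_.map_mul F]
  have h2 : P' * P = 1 := mul_eq_one_comm.mp h
  rw [Matrix.charpoly, key, det_mul, det_mul, Matrix.charpoly, mul_comm, ← mul_assoc,
    ← det_mul, ← _root_.map_mul F, h2, _root_.map_one F, det_one, one_mul]

lemma charpoly_diagonal_roots {n : Type*} [Fintype n] [DecidableEq n] (μ : n → ℝ) :
    (Matrix.diagonal μ).charpoly.roots = Finset.univ.val.map μ := by
  have h : (Matrix.diagonal μ).charpoly = ∏ i : n, (Polynomial.X - Polynomial.C (μ i)) := by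
    rw [Matrix.charpoly]
    have : Matrix.charmatrix (Matrix.diagonal μ)
        = Matrix.diagonal (fun i => Polynomial.X - Polynomial.C (μ i)) := by
      ext i j
      by_cases h : i = j
      · subst h; simp
      · rw [Matrix.charmatrix_apply_ne _ _ _ h, Matrix.diagonal_apply_ne _ h,
          Matrix.diagonal_apply_ne _ h]
        simp
    rw [this, Matrix.det_diagonal]
  have key := Polynomial.roots_multiset_prod_X_sub_C (Finset.univ.val.map μ)
  rw [Multiset.map_map] at key
  rw [h, Finset.prod_eq_multiset_prod]
  exact key

lemma count_neg_ge {N k : ℕ} (A U : Matrix (Fin N) (Fin N) ℝ) (μ : Fin N → ℝ)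
    (hA : A = U * Matrix.diagonal μ * Uᵀ)
    (J : (Fin k → ℝ) →ₗ[ℝ] (Fin N → ℝ))
    (hJ : ∀ c, c ≠ 0 → (J c) ⬝ᵥ A.mulVec (J c) < 0) :
    k ≤ (Finset.univ.filter fun i => μ i < 0).card := by
  by_contra hcon
  push_neg at hcon
  set s := (Finset.univ.filter fun i : Fin N => μ i < 0) with hs
  set F : (Fin k → ℝ) →ₗ[ℝ] ({i // i ∈ s} → ℝ) :=
    (LinearMap.funLeft ℝ ℝ (Subtype.val)) ∘ₗ (Matrix.mulVecLin Uᵀ) ∘ₗ J with hFdef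
  have hnotinj : ¬ Function.Injective F := by
    intro hinj
    have h1 := LinearMap.finrank_le_finrank_of_injective hinj
    rw [Module.finrank_pi ℝ, Module.finrank_pi ℝ, Fintype.card_fin, Fintype.card_coe] at h1
    omega
  rw [← LinearMap.ker_eq_bot] at hnotinj
  obtain ⟨c, hcker, hc⟩ := Submodule.ne_bot_iff _ |>.mp hnotinj
  have hFc : F c = 0 := hcker
  set v := J c with hv
  set w := Uᵀ.mulVec v with hw
  have hwzero : ∀ i, μ i < 0 → w i = 0 := by
    intro i hi
    have : (F c) ⟨i, by simp [hs, hi]⟩ = 0 := by rw [hFc]; rfl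
    exact this
  have hq : v ⬝ᵥ A.mulVec v = ∑ i, μ i * (w i * w i) := by
    rw [hA]
    rw [← Matrix.mulVec_mulVec, ← Matrix.mulVec_mulVec]
    rw [Matrix.dotProduct_mulVec]
    have hvU : v ᵥ* U = w := by rw [hw, ← Matrix.vecMul_transpose]; simp
    rw [hvU]
    rw [← hw]
    simp only [dotProduct, Matrix.mulVec_diagonal]
    exact Finset.sum_congr rfl (fun i _ => by ring)
  have hge : 0 ≤ v ⬝ᵥ A.mulVec v := by
    rw [hq]
    apply Finset.sum_nonneg
    intro i _
    rcases lt_or_ge (μ i) 0 with h | h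
    · rw [hwzero i h]; ring_nf; simp
    · exact mul_nonneg h (mul_self_nonneg _)
  exact absurd (hJ c hc) (not_lt.mpr hge)

lemma sum_double (k : ℕ) (f : ℕ → ℝ) :
    ∑ i ∈ Finset.range (2*k), f i = ∑ t ∈ Finset.range k, (f (2*t) + f (2*t+1)) := by
  induction k with
  | zero => simp
  | succ n ih =>
    rw [Nat.mul_succ, Finset.sum_range_succ, Finset.sum_range_succ, Finset.sum_range_succ, ← ih]
    ring_nf

lemma tN_ee (α : ℕ → ℕ) (u t : ℕ) :
    tN α (2*u) (2*t) = if t = u then 1 - (α (2*u) : ℝ)⁻¹ else 0 := by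
  unfold tN
  by_cases h : t = u
  · subst h
    have : Odd (2*t + 1) := ⟨t, by ring⟩
    simp [this]
  · have h1 : ¬ (2*u = 2*t) := by omega
    have h2 : ¬ Even (2*u + 1) := by simp [Nat.even_add_one]
    have h3 : ¬ Even (2*t + 1) := by simp [Nat.even_add_one]
    simp [h1, h2, h3, h]

lemma tN_eo (α : ℕ → ℕ) (u t : ℕ) :
    tN α (2*u) (2*t+1) = if u ≤ t then 1 else 0 := by
  unfold tN
  have h1 : ¬ (2*u = 2*t+1) := by omega
  have h2 : ¬ Even (2*u + 1) := by simp [Nat.even_add_one]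
  have h3 : Even (2*t + 1 + 1) := by refine ⟨t+1, by ring⟩
  by_cases h : u ≤ t
  · have : 2*u < 2*t+1 := by omega
    simp [h1, h2, h3, this, h]
  · have h5 : ¬ (2*u < 2*t+1) := by omega
    simp [h1, h2, h3, h5, h]

lemma tN_oe (α : ℕ → ℕ) (u t : ℕ) :
    tN α (2*u+1) (2*t) = if t ≤ u then 1 else 0 := by
  rw [tN_symm, tN_eo]

lemma tN_oo (α : ℕ → ℕ) (u t : ℕ) :
    tN α (2*u+1) (2*t+1) = if t = u then 0 else 1 := by
  unfold tN
  by_cases h : t = u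
  · subst h
    have : ¬ Odd (2*t + 1 + 1) := by simp [Nat.odd_add_one, Nat.even_add_one]
    simp [this]
  · have h1 : ¬ (2*u+1 = 2*t+1) := by omega
    have h2 : Even (2*u + 1 + 1) := ⟨u+1, by ring⟩
    have h3 : Even (2*t + 1 + 1) := ⟨t+1, by ring⟩
    have h4 : 2*t+1 < 2*u+1 ∨ 2*u+1 < 2*t+1 := by omega
    rcases h4 with h4 | h4 <;> simp [h1, h2, h3, h4, h, Ne.symm h]

lemma inner_even (α : ℕ → ℕ) (k : ℕ) (l : ℝ) (d : ℕ → ℝ) (u : ℕ) (hu : u < k) :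
    ∑ j ∈ Finset.range (2*k), tN α (2*u) j *
        (if j % 2 = 0 then d (j/2) else l * d (j/2))
      = (1 - (α (2*u) : ℝ)⁻¹) * d u + l * (∑ t ∈ Finset.range k, d t
          - ∑ t ∈ Finset.range u, d t) := by
  have hR : ∑ t ∈ Finset.range u, d t + ∑ t ∈ Finset.Ico u k, d t
      = ∑ t ∈ Finset.range k, d t := by
    rw [Finset.range_eq_Ico, Finset.range_eq_Ico]
    exact Finset.sum_Ico_consecutive d (Nat.zero_le u) (le_of_lt hu)
  rw [sum_double]
  have hstep : ∀ t ∈ Finset.range k,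
      tN α (2*u) (2*t) * (if (2*t) % 2 = 0 then d ((2*t)/2) else l * d ((2*t)/2))
        + tN α (2*u) (2*t+1) * (if (2*t+1) % 2 = 0 then d ((2*t+1)/2) else l * d ((2*t+1)/2))
      = (if t = u then (1 - (α (2*u) : ℝ)⁻¹) * d t else 0)
        + (if u ≤ t then l * d t else 0) := by
    intro t _
    have e1 : (2*t) % 2 = 0 := by omega
    have e2 : ¬ ((2*t+1) % 2 = 0) := by omega
    have e3 : (2*t)/2 = t := by omega
    have e4 : (2*t+1)/2 = t := by omega
    rw [tN_ee, tN_eo, if_pos e1, if_neg e2, e3, e4]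
    split_ifs <;> ring
  rw [Finset.sum_congr rfl hstep, Finset.sum_add_distrib]
  rw [Finset.sum_ite_eq' (Finset.range k) u (fun t => (1 - (α (2*u) : ℝ)⁻¹) * d t),
    if_pos (Finset.mem_range.mpr hu)]
  have hfilter : Finset.filter (fun t => u ≤ t) (Finset.range k) = Finset.Ico u k := by
    ext x; simp [Finset.mem_Ico, Finset.mem_range, Finset.mem_filter, and_comm]
  rw [← Finset.sum_filter, hfilter, ← Finset.mul_sum]
  have : ∑ t ∈ Finset.Ico u k, d t
      = ∑ t ∈ Finset.range k, d t - ∑ t ∈ Finset.range u, d t := by linarith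
  rw [this]

lemma inner_odd (α : ℕ → ℕ) (k : ℕ) (l : ℝ) (d : ℕ → ℝ) (u : ℕ) (hu : u < k) :
    ∑ j ∈ Finset.range (2*k), tN α (2*u+1) j *
        (if j % 2 = 0 then d (j/2) else l * d (j/2))
      = (∑ t ∈ Finset.range u, d t + d u)
        + l * (∑ t ∈ Finset.range k, d t - d u) := by
  rw [sum_double]
  have hstep : ∀ t ∈ Finset.range k,
      tN α (2*u+1) (2*t) * (if (2*t) % 2 = 0 then d ((2*t)/2) else l * d ((2*t)/2))
        + tN α (2*u+1) (2*t+1) * (if (2*t+1) % 2 = 0 then d ((2*t+1)/2) else l * d ((2*t+1)/2))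
      = (if t ≤ u then d t else 0) + (l * d t - (if t = u then l * d t else 0)) := by
    intro t _
    have e1 : (2*t) % 2 = 0 := by omega
    have e2 : ¬ ((2*t+1) % 2 = 0) := by omega
    have e3 : (2*t)/2 = t := by omega
    have e4 : (2*t+1)/2 = t := by omega
    rw [tN_oe, tN_oo, if_pos e1, if_neg e2, e3, e4]
    split_ifs <;> ring
  rw [Finset.sum_congr rfl hstep, Finset.sum_add_distrib, Finset.sum_sub_distrib]
  rw [Finset.sum_ite_eq' (Finset.range k) u (fun t => l * d t),
    if_pos (Finset.mem_range.mpr hu)]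
  have hfilter : Finset.filter (fun t => t ≤ u) (Finset.range k) = Finset.range (u+1) := by
    ext x; simp only [Finset.mem_filter, Finset.mem_range]; omega
  rw [← Finset.sum_filter, hfilter, Finset.sum_range_succ, ← Finset.mul_sum]
  ring

lemma quad_id (α : ℕ → ℕ) (k : ℕ) (l : ℝ) (d : ℕ → ℝ) :
    ∑ i ∈ Finset.range (2*k),
      ((if i % 2 = 0 then d (i/2) else l * d (i/2)) *
        ∑ j ∈ Finset.range (2*k), tN α i j * (if j % 2 = 0 then d (j/2) else l * d (j/2)))
    = (∑ t ∈ Finset.range k, (1 - (α (2*t) : ℝ)⁻¹ + l - l^2) * d t^2)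
      + (l + l^2) * (∑ t ∈ Finset.range k, d t)^2 := by
  rw [sum_double]
  have hstep : ∀ u ∈ Finset.range k,
      (if (2*u) % 2 = 0 then d ((2*u)/2) else l * d ((2*u)/2)) *
          (∑ j ∈ Finset.range (2*k), tN α (2*u) j *
            (if j % 2 = 0 then d (j/2) else l * d (j/2)))
        + (if (2*u+1) % 2 = 0 then d ((2*u+1)/2) else l * d ((2*u+1)/2)) *
          (∑ j ∈ Finset.range (2*k), tN α (2*u+1) j *
            (if j % 2 = 0 then d (j/2) else l * d (j/2)))
      = (1 - (α (2*u) : ℝ)⁻¹ + l - l^2) * d u^2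
          + (l + l^2) * (d u * ∑ t ∈ Finset.range k, d t) := by
    intro u hu
    have hu' := Finset.mem_range.mp hu
    have e1 : (2*u) % 2 = 0 := by omega
    have e2 : ¬ ((2*u+1) % 2 = 0) := by omega
    have e3 : (2*u)/2 = u := by omega
    have e4 : (2*u+1)/2 = u := by omega
    rw [inner_even α k l d u hu', inner_odd α k l d u hu', if_pos e1, if_neg e2, e3, e4]
    ring
  rw [Finset.sum_congr rfl hstep, Finset.sum_add_distrib, ← Finset.mul_sum, ← Finset.sum_mul]
  ring

lemma S_entry (α : ℕ → ℕ) (k : ℕ) (i j : Fin (2*k)) :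
    (Ei α k * tMat α k * Ei α k) i j
      = Real.sqrt (α i.val) * tN α i.val j.val * Real.sqrt (α j.val) := by
  rw [Ei, Matrix.mul_diagonal, Matrix.diagonal_mul]
  rfl

lemma Jquad (α : ℕ → ℕ) (k : ℕ) (hα : ∀ i < 2 * k, 0 < α i) (l : ℝ) (c : Fin k → ℝ) :
    (Jmap α k l c) ⬝ᵥ (Ei α k * tMat α k * Ei α k).mulVec (Jmap α k l c)
    = (∑ t ∈ Finset.range k, (1 - (α (2*t) : ℝ)⁻¹ + l - l^2) * (dN k c t)^2)
      + (l + l^2) * (∑ t ∈ Finset.range k, dN k c t)^2 := by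
  set y : ℕ → ℝ := fun j => if j % 2 = 0 then dN k c (j/2) else l * dN k c (j/2) with hy
  have hsqrt : ∀ i : Fin (2*k), Real.sqrt (α i.val) ≠ 0 := by
    intro i
    have : (0:ℝ) < α i.val := by exact_mod_cast hα i.val i.isLt
    positivity
  have hterm : ∀ i : Fin (2*k),
      (Jmap α k l c) i * ((Ei α k * tMat α k * Ei α k).mulVec (Jmap α k l c)) i
        = y i.val * ∑ j ∈ Finset.range (2*k), tN α i.val j * y j := by
    intro i
    have hinner : ((Ei α k * tMat α k * Ei α k).mulVec (Jmap α k l c)) i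
        = Real.sqrt (α i.val) * ∑ j : Fin (2*k), tN α i.val j.val * y j.val := by
      rw [Matrix.mulVec, dotProduct, Finset.mul_sum]
      refine Finset.sum_congr rfl fun j _ => ?_
      rw [S_entry]
      show Real.sqrt (α i.val) * tN α i.val j.val * Real.sqrt (α j.val)
          * ((Real.sqrt (α j.val))⁻¹ * y j.val) = _
      field_simp [hsqrt j]
    rw [hinner]
    show (Real.sqrt (α i.val))⁻¹ * y i.val
        * (Real.sqrt (α i.val) * ∑ j : Fin (2*k), tN α i.val j.val * y j.val) = _
    rw [Fin.sum_univ_eq_sum_range (fun j => tN α i.val j * y j) (2*k)]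
    field_simp [hsqrt i]
  rw [dotProduct, Finset.sum_congr rfl (fun i _ => hterm i),
    Fin.sum_univ_eq_sum_range (fun i => y i * ∑ j ∈ Finset.range (2*k), tN α i j * y j) (2*k)]
  exact quad_id α k l (dN k c)

lemma dN_sq_sum_pos (k : ℕ) (c : Fin k → ℝ) (hc : c ≠ 0) :
    0 < ∑ t ∈ Finset.range k, (dN k c t)^2 := by
  obtain ⟨u, hu⟩ := Function.ne_iff.mp hc
  apply Finset.sum_pos' (fun t _ => sq_nonneg _)
  refine ⟨u.val, Finset.mem_range.mpr u.isLt, ?_⟩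
  have : dN k c u.val = c u := by
    simp [dN, u.isLt]
  rw [this, pow_two]
  exact mul_self_pos.mpr hu

lemma Jneg (α : ℕ → ℕ) (k : ℕ) (hα : ∀ i < 2 * k, 0 < α i) (c : Fin k → ℝ) (hc : c ≠ 0) :
    (Jmap α k (-1) c) ⬝ᵥ (Ei α k * tMat α k * Ei α k).mulVec (Jmap α k (-1) c) < 0 := by
  rw [Jquad α k hα (-1) c]
  have h2 : ((-1 : ℝ) + (-1)^2) = 0 := by norm_num
  rw [h2, zero_mul, add_zero]
  have hle : ∑ t ∈ Finset.range k, (1 - (α (2*t) : ℝ)⁻¹ + (-1) - (-1)^2) * (dN k c t)^2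
      ≤ ∑ t ∈ Finset.range k, (-1) * (dN k c t)^2 := by
    apply Finset.sum_le_sum
    intro t _
    apply mul_le_mul_of_nonneg_right _ (sq_nonneg _)
    have : (0:ℝ) ≤ (α (2*t) : ℝ)⁻¹ := by positivity
    linarith
  have hpos := dN_sq_sum_pos k c hc
  calc ∑ t ∈ Finset.range k, (1 - (α (2*t) : ℝ)⁻¹ + (-1) - (-1)^2) * (dN k c t)^2
      ≤ ∑ t ∈ Finset.range k, (-1) * (dN k c t)^2 := hle
    _ = -(∑ t ∈ Finset.range k, (dN k c t)^2) := by
        rw [← Finset.mul_sum]; ring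
    _ < 0 := by linarith

lemma Jpos (α : ℕ → ℕ) (k : ℕ) (hα : ∀ i < 2 * k, 0 < α i) (c : Fin k → ℝ) (hc : c ≠ 0) :
    0 < (Jmap α k (1/2) c) ⬝ᵥ (Ei α k * tMat α k * Ei α k).mulVec (Jmap α k (1/2) c) := by
  rw [Jquad α k hα (1/2) c]
  have hle : ∑ t ∈ Finset.range k, (1/4 : ℝ) * (dN k c t)^2
      ≤ ∑ t ∈ Finset.range k, (1 - (α (2*t) : ℝ)⁻¹ + (1/2) - (1/2)^2) * (dN k c t)^2 := by
    apply Finset.sum_le_sum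
    intro t ht
    apply mul_le_mul_of_nonneg_right _ (sq_nonneg _)
    have h1 : (1:ℝ) ≤ (α (2*t) : ℝ) := by
      have h := hα (2*t) (by have := Finset.mem_range.mp ht; omega)
      exact_mod_cast h
    have h2 : (α (2*t) : ℝ)⁻¹ ≤ 1 := by
      rw [← inv_one]
      exact inv_anti₀ zero_lt_one h1
    norm_num
    linarith
  have hpos := dN_sq_sum_pos k c hc
  have hsq : (0:ℝ) ≤ ((1:ℝ)/2 + (1/2)^2) * (∑ t ∈ Finset.range k, dN k c t)^2 := by positivity
  have : (0:ℝ) < ∑ t ∈ Finset.range k, (1/4 : ℝ) * (dN k c t)^2 := by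
    rw [← Finset.mul_sum]; linarith
  linarith

end Stmt8Aux

/-- the inertia of `Q_π(G)` is `(k, 0, k)`: it has exactly `k` negative, no zero
and exactly `k` positive eigenvalues, counted as root multiplicities of the characteristic
polynomial. -/
theorem stmt8 (k : ℕ) (hk : 1 ≤ k) (α : ℕ → ℕ) (hα : ∀ i < 2 * k, 0 < α i) :
    (((quotientMatrix α k).charpoly.roots.filter fun x => x < 0).card = k) ∧
      ((quotientMatrix α k).charpoly.rootMultiplicity 0 = 0) ∧
      (((quotientMatrix α k).charpoly.roots.filter fun x => 0 < x).card = k) := by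
  classical
  -- the symmetric matrix S similar to Q
  set T := tMat α k with hT
  set E := Ei α k with hE
  set S := E * T * E with hSdef
  set E' : Matrix (Fin (2*k)) (Fin (2*k)) ℝ :=
    Matrix.diagonal (fun i => (Real.sqrt (α i.val))⁻¹) with hE'
  have hsqrtpos : ∀ i : Fin (2*k), 0 < Real.sqrt (α i.val) := by
    intro i
    have : (0:ℝ) < α i.val := by exact_mod_cast hα i.val i.isLt
    positivity
  have hEE' : E * E' = 1 := by
    have hfun : (fun i : Fin (2*k) => Real.sqrt (α i.val) * (Real.sqrt (α i.val))⁻¹)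
        = fun _ => (1:ℝ) := by
      funext i; exact mul_inv_cancel₀ (hsqrtpos i).ne'
    rw [hE, hE', Ei, Matrix.diagonal_mul_diagonal, hfun, Matrix.diagonal_one]
  have hDE : Matrix.diagonal (fun i : Fin (2*k) => (α i.val : ℝ)) = E * E := by
    have hfun : (fun i : Fin (2*k) => Real.sqrt (α i.val) * Real.sqrt (α i.val))
        = fun i : Fin (2*k) => (α i.val : ℝ) := by
      funext i; exact Real.mul_self_sqrt (Nat.cast_nonneg _)
    rw [hE, Ei, Matrix.diagonal_mul_diagonal, hfun]
  have hQS : E * quotientMatrix α k * E' = S := by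
    rw [hQ_eq α k hα, hDE, hSdef]
    rw [← Matrix.mul_assoc, ← Matrix.mul_assoc, Matrix.mul_assoc (E * (T : _) * E) E E',
      hEE', Matrix.mul_one]
  have hcharQS : (quotientMatrix α k).charpoly = S.charpoly := by
    rw [← hQS]
    exact (charpoly_conj E E' _ hEE').symm
  -- S is symmetric
  have hSherm : S.IsHermitian := by
    rw [Matrix.IsHermitian, Matrix.conjTranspose_eq_transpose_of_trivial]
    ext i j
    rw [Matrix.transpose_apply, hSdef, S_entry, S_entry, tN_symm]
    ring
  set μ := hSherm.eigenvalues with hμ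
  set U : Matrix (Fin (2*k)) (Fin (2*k)) ℝ :=
    (Matrix.IsHermitian.eigenvectorUnitary hSherm : Matrix (Fin (2*k)) (Fin (2*k)) ℝ) with hU
  have hspec : S = U * Matrix.diagonal μ * Uᵀ := by
    have h := hSherm.spectral_theorem
    rw [RCLike.ofReal_real_eq_id, Function.id_comp] at h
    rw [Unitary.conjStarAlgAut_apply, Matrix.star_eq_conjTranspose,
      Matrix.conjTranspose_eq_transpose_of_trivial] at h
    exact h
  have hUU : U * Uᵀ = 1 := by
    have h := Matrix.mem_unitaryGroup_iff.mp (hSherm.eigenvectorUnitary).2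
    rw [Matrix.star_eq_conjTranspose, Matrix.conjTranspose_eq_transpose_of_trivial] at h
    exact h
  have hroots : (quotientMatrix α k).charpoly.roots = Finset.univ.val.map μ := by
    rw [hcharQS, hspec, charpoly_conj U Uᵀ _ hUU, charpoly_diagonal_roots]
  -- eigenvalue counts
  have hNeg : k ≤ (Finset.univ.filter fun i => μ i < 0).card :=
    count_neg_ge S U μ hspec (Jmap α k (-1)) (fun c hc => Jneg α k hα c hc)
  have hPos : k ≤ (Finset.univ.filter fun i => 0 < μ i).card := by
    have hspecneg : -S = U * Matrix.diagonal (fun i => -(μ i)) * Uᵀ := by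
      have : Matrix.diagonal (fun i : Fin (2*k) => -(μ i)) = -Matrix.diagonal μ := by
        rw [← Matrix.diagonal_neg]
      rw [this, Matrix.mul_neg, Matrix.neg_mul, hspec]
    have h := count_neg_ge (-S) U (fun i => -(μ i)) hspecneg (Jmap α k (1/2))
      (fun c hc => by
        rw [Matrix.neg_mulVec, dotProduct_neg]
        have := Jpos α k hα c hc
        linarith)
    calc k ≤ (Finset.univ.filter fun i => -(μ i) < 0).card := h
      _ = (Finset.univ.filter fun i => 0 < μ i).card := by
          congr 1
          apply Finset.filter_congr
          intro i _
          simp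
  have hdisj : Disjoint (Finset.univ.filter fun i => μ i < 0)
      (Finset.univ.filter fun i => 0 < μ i) := by
    rw [Finset.disjoint_filter]
    intro i _ h1
    exact not_lt.mpr (le_of_lt h1)
  have hcards : (Finset.univ.filter fun i => μ i < 0).card
      + (Finset.univ.filter fun i => 0 < μ i).card ≤ 2 * k := by
    rw [← Finset.card_union_of_disjoint hdisj]
    calc _ ≤ Finset.univ.card := Finset.card_le_univ _
      _ = 2 * k := by rw [Finset.card_univ, Fintype.card_fin]
  have hNcard : (Finset.univ.filter fun i => μ i < 0).card = k := by omega
  have hPcard : (Finset.univ.filter fun i => 0 < μ i).card = k := by omega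
  have hnz : ∀ i, μ i ≠ 0 := by
    intro i
    have huniv : ((Finset.univ.filter fun i => μ i < 0)
        ∪ (Finset.univ.filter fun i => 0 < μ i)) = Finset.univ := by
      apply Finset.eq_univ_of_card
      rw [Finset.card_union_of_disjoint hdisj, hNcard, hPcard, Fintype.card_fin]
      ring
    have : i ∈ ((Finset.univ.filter fun i => μ i < 0)
        ∪ (Finset.univ.filter fun i => 0 < μ i)) := by
      rw [huniv]; exact Finset.mem_univ i
    rcases Finset.mem_union.mp this with h | h
    · exact (Finset.mem_filter.mp h).2.ne
    · exact (Finset.mem_filter.mp h).2.ne'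
  refine ⟨?_, ?_, ?_⟩
  · rw [hroots, ← Multiset.countP_eq_card_filter, Multiset.countP_map]
    exact hNcard
  · rw [← Polynomial.count_roots, hroots]
    apply Multiset.count_eq_zero.mpr
    intro hmem
    obtain ⟨i, _, hi⟩ := Multiset.mem_map.mp hmem
    exact hnz i hi
  · rw [hroots, ← Multiset.countP_eq_card_filter, Multiset.countP_map]
    exact hPcard
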